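/- Let α ∈ (0,1], let f : [0,T] → ℝ be α-Hölder continuous, and let Z ⊆ [0,T] be a closed set whose α-dimensional Hausdorff measure is zero. If f is locally constant on [0,T] ∖ Z (i.e., f is constant on each connected component of the complement of Z), then f is constant on [0,T]. -/

import Mathlib

open Set MeasureTheory Filter Topology
open scoped NNReal ENNReal

/-- Let `α ∈ (0,1]`, let `f : [0,T] → ℝ` be `α`-Hölder continuous, and let
`Z ⊆ [0,T]` be a closed set of zero `α`-dimensional Hausdorff measure. If `f` is
locally constant off `Z` (i.e. constant on every interval avoiding `Z`, hence on
every connected component of `[0,T] ∖ Z`), then `f` is constant on `[0,T]`. -/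
theorem holder_constant_off_null_set_is_constant
    (α T : ℝ) (hα : 0 < α) (hα1 : α ≤ 1) (hT : 0 ≤ T)
    (f : ℝ → ℝ) (C : ℝ)
    (hf : ∀ s ∈ Icc (0 : ℝ) T, ∀ t ∈ Icc (0 : ℝ) T, |f t - f s| ≤ C * |t - s| ^ α)
    (Z : Set ℝ) (hZsub : Z ⊆ Icc 0 T) (hZclosed : IsClosed Z)
    (hZnull : μH[α] Z = 0)
    (hloc : ∀ s ∈ Icc (0 : ℝ) T, ∀ t ∈ Icc (0 : ℝ) T,
      s ≤ t → Icc s t ∩ Z = ∅ → f s = f t) :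
    ∀ s ∈ Icc (0 : ℝ) T, ∀ t ∈ Icc (0 : ℝ) T, f s = f t := by
  set C' : ℝ≥0 := ⟨max C 0, le_max_right _ _⟩ with hC'def
  have hf' : ∀ s ∈ Icc (0:ℝ) T, ∀ t ∈ Icc (0:ℝ) T, |f t - f s| ≤ (C':ℝ) * |t - s| ^ α := by
    intro s hs t ht
    refine (hf s hs t ht).trans ?_
    exact mul_le_mul_of_nonneg_right (le_max_left _ _) (Real.rpow_nonneg (abs_nonneg _) _)
  have hrpos : (0 : ℝ≥0) < α.toNNReal := Real.toNNReal_pos.mpr hα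
  have hH : HolderOnWith C' α.toNNReal f (Icc 0 T) := by
    intro x hx y hy
    rw [edist_dist, edist_dist, Real.dist_eq, Real.dist_eq]
    calc ENNReal.ofReal |f x - f y| ≤ ENNReal.ofReal ((C':ℝ) * |x - y| ^ α) :=
          ENNReal.ofReal_le_ofReal (hf' y hy x hx)
      _ = (C' : ℝ≥0∞) * ENNReal.ofReal |x - y| ^ ((α.toNNReal : ℝ)) := by
          rw [ENNReal.ofReal_mul C'.coe_nonneg,
            ← ENNReal.ofReal_rpow_of_nonneg (abs_nonneg _) hα.le,
            Real.coe_toNNReal α hα.le, ENNReal.ofReal_coe_nnreal]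
  have hcont : ContinuousOn f (Icc 0 T) := hH.continuousOn hrpos
  -- image of Z is Lebesgue-null
  have himg : volume (f '' Z) = 0 := by
    have h1 := (hH.mono hZsub).hausdorffMeasure_image_le hrpos (zero_le_one)
    rw [Real.coe_toNNReal α hα.le, mul_one, hZnull, mul_zero] at h1
    have h2 : (μH[1] : Measure ℝ) = volume := MeasureTheory.hausdorffMeasure_real
    rw [← h2]
    exact le_antisymm h1 zero_le
  -- main claim for s ≤ t
  have key : ∀ s ∈ Icc (0:ℝ) T, ∀ t ∈ Icc (0:ℝ) T, s ≤ t → f s = f t := by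
    intro s hs t ht hst
    -- every value on [s,t] is f s or in f '' Z
    have himage : f '' Icc s t ⊆ insert (f s) (f '' Z) := by
      rintro _ ⟨x, hx, rfl⟩
      by_cases hxZ : x ∈ Z
      · exact Or.inr ⟨x, hxZ, rfl⟩
      · set A : Set ℝ := insert s (Z ∩ Icc s x) with hA
        have hAne : A.Nonempty := ⟨s, Or.inl rfl⟩
        have hAbdd : BddAbove A := by
          refine ⟨x, ?_⟩
          rintro y (rfl | ⟨_, _, hy2⟩)
          · exact hx.1
          · exact hy2
        have hAclosed : IsClosed A := by
          rw [hA, insert_eq]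
          exact isClosed_singleton.union (hZclosed.inter isClosed_Icc)
        set a := sSup A with ha
        have haA : a ∈ A := hAclosed.csSup_mem hAne hAbdd
        have hax : a ≤ x := csSup_le hAne (by rintro y (rfl | ⟨_, _, hy2⟩); exacts [hx.1, hy2])
        have hsa : s ≤ a := le_csSup hAbdd (Or.inl rfl)
        have haIcc : a ∈ Icc (0:ℝ) T := ⟨hs.1.trans hsa, le_trans (hax.trans hx.2) ht.2⟩
        rcases eq_or_lt_of_le hax with heq | hlt
        · -- a = x, so x = s (since x ∉ Z)
          rcases haA with h1 | h2
          · exact Or.inl (by rw [← heq, h1])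
          · exact absurd (heq ▸ h2.1) hxZ
        · -- a < x : f a = f x, and a ∈ {s} ∪ Z
          have hfa : f a = f x := by
            have hIocsub : Ioc a x ⊆ Icc (0:ℝ) T := fun y hy =>
              ⟨haIcc.1.trans hy.1.le, le_trans (hy.2.trans hx.2) ht.2⟩
            have hconst : ∀ y ∈ Ioc a x, f y = f x := by
              intro y hy
              have hempty : Icc y x ∩ Z = ∅ := by
                ext z
                simp only [mem_inter_iff, mem_Icc, mem_empty_iff_false, iff_false, not_and]
                rintro ⟨hz1, hz2⟩ hzZ
                have hzA : z ∈ A := Or.inr ⟨hzZ, ⟨hsa.trans (hy.1.le.trans hz1), hz2⟩⟩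
                have : z ≤ a := le_csSup hAbdd hzA
                linarith [hy.1]
              exact hloc y (hIocsub hy) x ⟨hs.1.trans hx.1, hx.2.trans ht.2⟩ hy.2 hempty
            haveI : (𝓝[Ioc a x] a).NeBot := by
              rw [← mem_closure_iff_nhdsWithin_neBot, closure_Ioc hlt.ne]
              exact ⟨le_refl a, hlt.le⟩
            have h1 : Tendsto f (𝓝[Ioc a x] a) (𝓝 (f a)) :=
              ((hcont a haIcc).mono hIocsub).tendsto.mono_left
                (nhdsWithin_mono a (fun y hy => hy))
            have h2 : Tendsto f (𝓝[Ioc a x] a) (𝓝 (f x)) := by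
              refine Tendsto.congr' ?_ tendsto_const_nhds
              filter_upwards [self_mem_nhdsWithin] with y hy
              exact (hconst y hy).symm
            exact tendsto_nhds_unique h1 h2
          rcases haA with h1 | h2
          · exact Or.inl (by rw [← hfa, h1])
          · exact Or.inr ⟨a, h2.1, hfa⟩
    -- intermediate value + measure
    by_contra hne
    have hIccsub : Icc s t ⊆ Icc (0:ℝ) T := Icc_subset_Icc hs.1 ht.2
    have huIcc : uIcc s t = Icc s t := uIcc_of_le hst
    have hiv : uIcc (f s) (f t) ⊆ f '' Icc s t := by
      have := intermediate_value_uIcc (hcont.mono (huIcc ▸ hIccsub))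
      rwa [huIcc] at this
    have hnull : volume (insert (f s) (f '' Z)) = 0 := by
      rw [insert_eq]
      exact measure_union_null (measure_singleton _) himg
    have h0 : volume (uIcc (f s) (f t)) = 0 :=
      measure_mono_null (hiv.trans himage) hnull
    rw [Real.volume_interval] at h0
    have : |f t - f s| ≤ 0 := by
      by_contra h
      push_neg at h
      exact (ENNReal.ofReal_pos.mpr h).ne' h0
    have := abs_nonpos_iff.mp this
    exact hne (by linarith)
  intro s hs t ht
  rcases le_total s t with h | h
  · exact key s hs t ht h
  · exact (key t ht s hs h).symm
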